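/- Let D be an N×N irreducible Q-matrix (nonnegative off-diagonal entries, zero row sums) and let D₁ = βκᵀ be a nonzero rank-one matrix with nonnegative entries, β = D₁1, κᵀ1 = 1, such that D₀ := D − D₁ has nonnegative off-diagonal entries. Then D₀ is nonsingular. -/
import Mathlib


open Matrix

/-- A matrix is irreducible iff from every nonempty proper subset of indices there is a
nonzero entry leaving the subset (equivalently, no simultaneous permutation of rows and
columns puts the matrix in block upper triangular form). -/
def MatrixIrreducible {N : ℕ} (D : Matrix (Fin N) (Fin N) ℝ) : Prop :=
  ∀ S : Set (Fin N), S.Nonempty → S ≠ Set.univ → ∃ i ∈ S, ∃ j ∉ S, D i j ≠ 0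

/-- If `D` is an irreducible Q-matrix and `D₁ = βκᵀ` is a nonzero rank-one nonnegative
matrix with `κᵀ1 = 1` such that `D₀ = D − D₁` has nonnegative off-diagonal entries, then
`D₀` is nonsingular. -/
theorem D0_nonsingular_of_renewal
    {N : ℕ} (D : Matrix (Fin N) (Fin N) ℝ)
    (hoff : ∀ i j, i ≠ j → 0 ≤ D i j)
    (hrow : ∀ i, ∑ j, D i j = 0)
    (hirr : MatrixIrreducible D)
    (β κv : Fin N → ℝ)
    (D₁ : Matrix (Fin N) (Fin N) ℝ) (hD₁ : D₁ = vecMulVec β κv)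
    (hD₁ne : D₁ ≠ 0) (hD₁0 : ∀ i j, 0 ≤ D₁ i j)
    (hβ : β = D₁ *ᵥ fun _ => 1) (hκ1 : ∑ j, κv j = 1)
    (D₀ : Matrix (Fin N) (Fin N) ℝ) (hD₀ : D₀ = D - D₁)
    (hD₀off : ∀ i j, i ≠ j → 0 ≤ D₀ i j) :
    IsUnit D₀ := by
  have hβi : ∀ i, β i = ∑ j, D₁ i j := by
    intro i; rw [hβ]; simp [mulVec, dotProduct]
  have hβ0 : ∀ i, 0 ≤ β i := fun i => (hβi i) ▸ Finset.sum_nonneg fun j _ => hD₁0 i j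
  have hβne : ∃ i, 0 < β i := by
    by_contra h
    push_neg at h
    have hβ0' : β = 0 := funext fun i => le_antisymm (h i) (hβ0 i)
    apply hD₁ne
    rw [hD₁, hβ0']
    ext i j; simp [vecMulVec]
  have hrow0 : ∀ i, ∑ j, D₀ i j = -β i := by
    intro i
    rw [hD₀]
    simp only [Matrix.sub_apply, Finset.sum_sub_distrib, hrow i, hβi i]
    ring
  by_contra hunit
  have hdet : D₀.det = 0 := by
    by_contra h
    exact hunit ((Matrix.isUnit_iff_isUnit_det D₀).mpr (isUnit_iff_ne_zero.mpr h))
  obtain ⟨v, hv0, hv⟩ := (Matrix.exists_mulVec_eq_zero_iff).mpr hdet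
  have hN : N ≠ 0 := by
    rintro rfl
    exact hv0 (funext fun i => i.elim0)
  haveI : NeZero N := ⟨hN⟩
  have hNe : (Finset.univ : Finset (Fin N)).Nonempty := Finset.univ_nonempty
  obtain ⟨i₀, _, hmax⟩ := Finset.exists_max_image Finset.univ (fun i => |v i|) hNe
  set M := |v i₀| with hM
  have hmax' : ∀ j, |v j| ≤ M := fun j => hmax j (Finset.mem_univ j)
  have hMpos : 0 < M := by
    have : ∃ k, v k ≠ 0 := by
      by_contra h; push_neg at h; exact hv0 (funext h)
    obtain ⟨k, hk⟩ := this
    exact lt_of_lt_of_le (abs_pos.mpr hk) (hmax' k)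
  have key : ∀ i, |v i| = M → β i = 0 ∧ ∀ j, j ≠ i → D₀ i j ≠ 0 → |v j| = M := by
    intro i hi
    have hsnn : (0:ℝ) ≤ ∑ j ∈ Finset.univ.erase i, D₀ i j :=
      Finset.sum_nonneg fun j hj => hD₀off i j (Ne.symm (Finset.ne_of_mem_erase hj))
    set s := ∑ j ∈ Finset.univ.erase i, D₀ i j with hs
    have hDii : D₀ i i = -β i - s := by
      have h := hrow0 i
      rw [← Finset.add_sum_erase _ _ (Finset.mem_univ i)] at h
      linarith
    have h1 : D₀ i i * v i + ∑ j ∈ Finset.univ.erase i, D₀ i j * v j = 0 := by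
      have h := congrFun hv i
      simp only [mulVec, dotProduct, Pi.zero_apply] at h
      rw [← Finset.add_sum_erase _ _ (Finset.mem_univ i)] at h
      exact h
    have habs : |D₀ i i| = β i + s := by
      rw [hDii, abs_of_nonpos (by linarith [hβ0 i])]; ring
    have h2 : (β i + s) * M = |∑ j ∈ Finset.univ.erase i, D₀ i j * v j| := by
      have : D₀ i i * v i = -(∑ j ∈ Finset.univ.erase i, D₀ i j * v j) := by linarith
      calc (β i + s) * M = |D₀ i i| * |v i| := by rw [habs, hi]
        _ = |D₀ i i * v i| := (abs_mul _ _).symm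
        _ = |∑ j ∈ Finset.univ.erase i, D₀ i j * v j| := by rw [this, abs_neg]
    have h3 : |∑ j ∈ Finset.univ.erase i, D₀ i j * v j|
        ≤ ∑ j ∈ Finset.univ.erase i, D₀ i j * |v j| := by
      refine le_trans (Finset.abs_sum_le_sum_abs _ _) (Finset.sum_le_sum ?_)
      intro j hj
      rw [abs_mul, abs_of_nonneg (hD₀off i j (Ne.symm (Finset.ne_of_mem_erase hj)))]
    have h4 : ∑ j ∈ Finset.univ.erase i, D₀ i j * |v j| ≤ s * M := by
      rw [hs, Finset.sum_mul]
      refine Finset.sum_le_sum fun j hj => ?_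
      exact mul_le_mul_of_nonneg_left (hmax' j)
        (hD₀off i j (Ne.symm (Finset.ne_of_mem_erase hj)))
    have hβi0 : β i = 0 := by
      have : (β i + s) * M ≤ s * M := le_trans (h2 ▸ h3) h4
      nlinarith [hβ0 i]
    refine ⟨hβi0, fun j hji hDij => ?_⟩
    have hzero : ∑ j ∈ Finset.univ.erase i, D₀ i j * (M - |v j|) = 0 := by
      have hexp : ∑ j ∈ Finset.univ.erase i, D₀ i j * (M - |v j|)
          = s * M - ∑ j ∈ Finset.univ.erase i, D₀ i j * |v j| := by
        rw [hs, Finset.sum_mul, ← Finset.sum_sub_distrib]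
        exact Finset.sum_congr rfl fun j _ => by ring
      have hle : s * M ≤ ∑ j ∈ Finset.univ.erase i, D₀ i j * |v j| := by
        have := h2 ▸ h3
        rw [hβi0] at this; linarith
      linarith
    have := (Finset.sum_eq_zero_iff_of_nonneg ?_).mp hzero j
      (Finset.mem_erase.mpr ⟨hji, Finset.mem_univ j⟩)
    · have hDpos : 0 < D₀ i j := lt_of_le_of_ne (hD₀off i j (Ne.symm hji)) (Ne.symm hDij)
      have : M - |v j| = 0 := by
        rcases mul_eq_zero.mp this with h | h
        · exact absurd h (ne_of_gt hDpos)
        · exact h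
      linarith
    · intro j hj
      exact mul_nonneg (hD₀off i j (Ne.symm (Finset.ne_of_mem_erase hj)))
        (by linarith [hmax' j])
  set S : Set (Fin N) := {i | |v i| = M} with hS
  have hSne : S.Nonempty := ⟨i₀, rfl⟩
  have hSuniv : S = Set.univ := by
    by_contra h
    obtain ⟨i, hiS, j, hjS, hDij⟩ := hirr S hSne h
    obtain ⟨hβi0, hkey⟩ := key i hiS
    have hji : j ≠ i := fun e => hjS (e ▸ hiS)
    have hDeq : D i j = D₀ i j + β i * κv j := by
      rw [hD₀, hD₁]; simp [vecMulVec]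
    rw [hβi0, zero_mul, add_zero] at hDeq
    exact hjS (hkey j hji (hDeq ▸ hDij))
  obtain ⟨i, hi⟩ := hβne
  have hiS : i ∈ S := hSuniv ▸ Set.mem_univ i
  have := (key i hiS).1
  linarith
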